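/- There is no cl₀-Luzin set: for every set L ⊆ ω^ω there exists a set A ∈ cl₀ such that the cardinality of A ∩ L equals the cardinality of L. -/

import Mathlib

open Cardinal Set

/-- A tree on ω: a nonempty set of finite sequences closed under initial segments. -/
def IsTree (T : Set (List ℕ)) : Prop :=
  T.Nonempty ∧ ∀ s ∈ T, ∀ n : ℕ, s.take n ∈ T

/-- The body of a tree: all infinite branches. -/
def treeBody (T : Set (List ℕ)) : Set (ℕ → ℕ) :=
  {x | ∀ n : ℕ, (List.ofFn fun i : Fin n => x i) ∈ T}

/-- Immediate successors of a node in a tree. -/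
def succs (T : Set (List ℕ)) (t : List ℕ) : Set ℕ := {n | t ++ [n] ∈ T}

/-- Sacks (perfect) tree: every node has an extension with at least two immediate successors. -/
def IsSacksTree (T : Set (List ℕ)) : Prop :=
  IsTree T ∧ ∀ s ∈ T, ∃ t ∈ T, s <+: t ∧ (succs T t).Nontrivial

/-- Miller tree: every node has an extension with infinitely many immediate successors. -/
def IsMillerTree (T : Set (List ℕ)) : Prop :=
  IsTree T ∧ ∀ s ∈ T, ∃ t ∈ T, s <+: t ∧ (succs T t).Infinite

/-- Laver tree: has a stem (a node comparable with every node) such that every node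
extending the stem has infinitely many immediate successors. -/
def IsLaverTree (T : Set (List ℕ)) : Prop :=
  IsTree T ∧ ∃ s ∈ T, (∀ t ∈ T, s <+: t ∨ t <+: s) ∧
    ∀ t ∈ T, s <+: t → (succs T t).Infinite

/-- Complete Laver tree: every node has infinitely many immediate successors. -/
def IsCompleteLaverTree (T : Set (List ℕ)) : Prop :=
  IsTree T ∧ ∀ t ∈ T, (succs T t).Infinite

/-- The tree ideal t₀ associated with a family of trees 𝕋. -/
def treeIdeal (𝕋 : Set (Set (List ℕ))) : Set (Set (ℕ → ℕ)) :=
  {A | ∀ P ∈ 𝕋, ∃ Q ∈ 𝕋, Q ⊆ P ∧ treeBody Q ∩ A = ∅}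

/-- t-measurability with respect to a family of trees 𝕋. -/
def TMeasurable (𝕋 : Set (Set (List ℕ))) (A : Set (ℕ → ℕ)) : Prop :=
  ∀ P ∈ 𝕋, ∃ Q ∈ 𝕋, Q ⊆ P ∧ (treeBody Q ⊆ A ∨ treeBody Q ∩ A = ∅)

/-- 𝕋-Bernstein set: meets and omits the body of every tree in 𝕋. -/
def TBernstein (𝕋 : Set (Set (List ℕ))) (B : Set (ℕ → ℕ)) : Prop :=
  ∀ T ∈ 𝕋, (B ∩ treeBody T).Nonempty ∧ (B \ treeBody T).Nonempty

/-- there is no cl₀-Luzin set. -/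
def pre (x : ℕ → ℕ) (n : ℕ) : List ℕ := List.ofFn fun i : Fin n => x i

lemma pre_length (x : ℕ → ℕ) (n : ℕ) : (pre x n).length = n := List.length_ofFn

lemma pre_succ (x : ℕ → ℕ) (n : ℕ) : pre x (n+1) = pre x n ++ [x n] := by
  rw [pre, List.ofFn_succ']
  simp [pre, List.concat_eq_append]

lemma pre_take (x : ℕ → ℕ) {k n : ℕ} (h : k ≤ n) : (pre x n).take k = pre x k := by
  induction n with
  | zero =>
    have : k = 0 := by omega
    subst this; simp [pre]
  | succ n ih =>
    rcases Nat.lt_or_ge k (n+1) with h' | h'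
    · rw [pre_succ, List.take_append_of_le_length (by rw [pre_length]; omega),
        ih (by omega)]
    · have : k = n+1 := by omega
      subst this
      exact List.take_of_length_le (by rw [pre_length])


def cyl (s : List ℕ) : Set (ℕ → ℕ) := {x | pre x s.length = s}

lemma idealB (B : List ℕ → Set ℕ) (hB : ∀ s, (B s).Finite) :
    {x : ℕ → ℕ | ∃ n, x n ∈ B (pre x n)} ∈ treeIdeal {T | IsCompleteLaverTree T} := by
  intro P hP
  obtain ⟨⟨⟨s₀, hs₀⟩, htake⟩, hinf⟩ := hP
  set Q : Set (List ℕ) := {t | t ∈ P ∧ ∀ k, (h : k < t.length) → t[k] ∉ B (t.take k)}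
    with hQdef
  have hQsub : Q ⊆ P := fun t ht => ht.1
  have hQnil : ([] : List ℕ) ∈ Q := by
    refine ⟨?_, ?_⟩
    · simpa using htake s₀ hs₀ 0
    · intro k h; simp at h
  have hQtake : ∀ t ∈ Q, ∀ n, t.take n ∈ Q := by
    intro t ht n
    refine ⟨htake t ht.1 n, ?_⟩
    intro k h
    have hlen : (t.take n).length = min n t.length := List.length_take
    have hk : k < t.length := by omega
    have hkn : k ≤ n := by omega
    rw [List.getElem_take, List.take_take, min_eq_left hkn]
    exact ht.2 k hk
  have hsuccs : ∀ t ∈ Q, succs Q t = succs P t \ B t := by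
    intro t ht
    ext n
    simp only [succs, hQdef, mem_setOf_eq, mem_diff]
    constructor
    · rintro ⟨h1, h2⟩
      refine ⟨h1, ?_⟩
      have := h2 t.length (by simp)
      rwa [List.getElem_concat_length rfl _, List.take_left] at this
    · rintro ⟨h1, h2⟩
      refine ⟨h1, ?_⟩
      intro k hk
      have hk' : k < t.length + 1 := by simpa using hk
      rcases Nat.lt_or_ge k t.length with h' | h'
      · rw [List.getElem_append_left h', List.take_append_of_le_length (le_of_lt h')]
        exact ht.2 k h'
      · have : k = t.length := by omega
        subst this
        rwa [List.getElem_concat_length rfl _, List.take_left]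
  refine ⟨Q, ⟨⟨⟨[], hQnil⟩, hQtake⟩, ?_⟩, hQsub, ?_⟩
  · intro t ht
    rw [hsuccs t ht]
    exact (hinf t ht.1).diff (hB t)
  · ext x
    simp only [mem_inter_iff, mem_empty_iff_false, iff_false, not_and, mem_setOf_eq]
    intro hxQ ⟨n, hn⟩
    have h1 : pre x (n+1) ∈ Q := hxQ (n+1)
    have hlen : n < (pre x (n+1)).length := by rw [pre_length]; omega
    have := h1.2 n hlen
    rw [pre_take x (Nat.le_succ n)] at this
    have e1 : (pre x (n+1))[n]'hlen = x n := by simp only [pre, List.getElem_ofFn]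
    rw [e1] at this
    exact this hn

lemma cyl_nil (L : Set (ℕ → ℕ)) : L ∩ cyl [] = L := by
  ext x; simp [cyl, pre]

lemma cyl_cover (L : Set (ℕ → ℕ)) (s : List ℕ) :
    L ∩ cyl s = ⋃ m, L ∩ cyl (s ++ [m]) := by
  ext x
  simp only [mem_inter_iff, mem_iUnion, cyl, mem_setOf_eq]
  constructor
  · rintro ⟨hx, hs⟩
    refine ⟨x s.length, hx, ?_⟩
    have hl : (s ++ [x s.length]).length = s.length + 1 := by simp
    rw [hl, pre_succ, hs]
  · rintro ⟨m, hx, hm⟩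
    refine ⟨hx, ?_⟩
    have hl : (s ++ [m]).length = s.length + 1 := by simp
    rw [hl, pre_succ] at hm
    have := congrArg (List.take s.length) hm
    rwa [List.take_left' (pre_length x s.length), List.take_left] at this

lemma child_big (L : Set (ℕ → ℕ)) (s : List ℕ) {ρ : Cardinal}
    (hρ : ℵ₀ ≤ ρ) (h : ρ < #↑(L ∩ cyl s)) :
    ∃ m, ρ < #↑(L ∩ cyl (s ++ [m])) := by
  by_contra hall
  push_neg at hall
  have h1 : #↑(L ∩ cyl s) ≤ ℵ₀ * ⨆ m, #↑(L ∩ cyl (s ++ [m])) := by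
    have h0 := Cardinal.mk_iUnion_le fun m => L ∩ cyl (s ++ [m])
    rw [Cardinal.mk_nat] at h0
    rw [cyl_cover L s]
    exact h0
  have h2 : (⨆ m, #↑(L ∩ cyl (s ++ [m]))) ≤ ρ := ciSup_le' hall
  have h3 : #↑(L ∩ cyl s) ≤ ℵ₀ * ρ := h1.trans (mul_le_mul_right h2 _)
  rw [Cardinal.mul_eq_max le_rfl hρ, max_eq_right hρ] at h3
  exact absurd h (not_lt.2 h3)

lemma descend (L : Set (ℕ → ℕ)) {ρ : Cardinal} (hρ : ℵ₀ ≤ ρ) :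
    ∀ n (s : List ℕ), ρ < #↑(L ∩ cyl s) →
      ∃ t : List ℕ, t.length = s.length + n ∧ ρ < #↑(L ∩ cyl t) := by
  intro n
  induction n with
  | zero => exact fun s h => ⟨s, by simp, h⟩
  | succ n ih =>
    intro s h
    obtain ⟨m, hm⟩ := child_big L s hρ h
    obtain ⟨t, ht1, ht2⟩ := ih (s ++ [m]) hm
    refine ⟨t, ?_, ht2⟩
    simp only [List.length_append, List.length_cons, List.length_nil] at ht1
    omega

theorem stmt11 :
    ∀ L : Set (ℕ → ℕ), ∃ A ∈ treeIdeal {T | IsCompleteLaverTree T},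
      Cardinal.mk ↑(A ∩ L) = Cardinal.mk ↑L := by
  intro L
  by_cases hc : #↑L ≤ ℵ₀
  · rcases eq_empty_or_nonempty L with hL | hL
    · refine ⟨_, idealB (fun _ => (∅ : Set ℕ)) (fun _ => finite_empty), ?_⟩
      rw [hL]
      simp
    · have hcount : L.Countable := by
        rw [← Set.countable_coe_iff]
        exact Cardinal.mk_le_aleph0_iff.mp hc
      obtain ⟨f, hf⟩ := hcount.exists_eq_range hL
      set B : List ℕ → Set ℕ :=
        fun s => {m | pre (f s.length) (s.length + 1) = s ++ [m]} with hB
      have hBfin : ∀ s, (B s).Finite := by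
        intro s
        apply Set.Subsingleton.finite
        intro a ha b hb
        simp only [hB, mem_setOf_eq] at ha hb
        have := List.append_cancel_left (ha.symm.trans hb)
        simpa using this
      refine ⟨_, idealB B hBfin, ?_⟩
      have hsub : L ⊆ {x : ℕ → ℕ | ∃ n, x n ∈ B (pre x n)} := by
        intro x hx
        rw [hf] at hx
        obtain ⟨j, rfl⟩ := hx
        refine ⟨j, ?_⟩
        simp only [hB, mem_setOf_eq, pre_length]
        exact pre_succ (f j) j
      rw [Set.inter_eq_right.mpr hsub]
  · push_neg at hc
    by_cases h1 : ∃ k : ℕ, #↑(L ∩ cyl [k]) = #↑L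
    · obtain ⟨k, hk⟩ := h1
      set B : List ℕ → Set ℕ := fun s => {m | s = [] ∧ m = k} with hB
      have hBfin : ∀ s, (B s).Finite := fun s =>
        Set.Finite.subset (finite_singleton k) (fun m hm => hm.2)
      refine ⟨_, idealB B hBfin, ?_⟩
      have hsub : L ∩ cyl [k] ⊆ {x : ℕ → ℕ | ∃ n, x n ∈ B (pre x n)} ∩ L := by
        rintro x ⟨hx, hcy⟩
        refine ⟨⟨0, ?_⟩, hx⟩
        have hthis : pre x 1 = [k] := hcy
        rw [pre_succ] at hthis
        simp only [pre, List.ofFn_zero, List.nil_append] at hthis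
        have hx0 : x 0 = k := by simpa using hthis
        exact ⟨by simp [pre], hx0⟩
      refine le_antisymm (Cardinal.mk_le_mk_of_subset inter_subset_right) ?_
      calc #↑L = #↑(L ∩ cyl [k]) := hk.symm
        _ ≤ _ := Cardinal.mk_le_mk_of_subset hsub
    · push_neg at h1
      have hlt : ∀ k : ℕ, #↑(L ∩ cyl [k]) < #↑L := fun k =>
        lt_of_le_of_ne (Cardinal.mk_le_mk_of_subset inter_subset_left) (h1 k)
      have hrootk : ∀ j : ℕ, (ℵ₀ ⊔ #↑(L ∩ cyl [j])) < #↑(L ∩ cyl []) := by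
        intro j
        rw [cyl_nil]
        exact max_lt hc (hlt j)
      have hu : ∀ j : ℕ, ∃ t : List ℕ,
          t.length = (List.nil (α := ℕ)).length + (j+1) ∧
          (ℵ₀ ⊔ #↑(L ∩ cyl [j])) < #↑(L ∩ cyl t) :=
        fun j => descend L le_sup_left (j+1) [] (hrootk j)
      choose u hulen huρ using hu
      set B : List ℕ → Set ℕ := fun s => {m | u s.length = s ++ [m]} with hB
      have hBfin : ∀ s, (B s).Finite := by
        intro s
        apply Set.Subsingleton.finite
        intro a ha b hb
        simp only [hB, mem_setOf_eq] at ha hb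
        have := List.append_cancel_left (ha.symm.trans hb)
        simpa using this
      refine ⟨_, idealB B hBfin, ?_⟩
      have hsub : ∀ j, L ∩ cyl (u j) ⊆ {x : ℕ → ℕ | ∃ n, x n ∈ B (pre x n)} ∩ L := by
        rintro j x ⟨hx, hcy⟩
        have hlen : (u j).length = j + 1 := by simpa using hulen j
        refine ⟨⟨j, ?_⟩, hx⟩
        simp only [hB, mem_setOf_eq, pre_length]
        have hpre : pre x (j+1) = u j := by
          have h' : pre x (u j).length = u j := hcy
          rwa [hlen] at h'
        rw [← hpre, pre_succ]
      refine le_antisymm (Cardinal.mk_le_mk_of_subset inter_subset_right) ?_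
      have hbig : ∀ j, #↑(L ∩ cyl [j]) ≤
          #↑({x : ℕ → ℕ | ∃ n, x n ∈ B (pre x n)} ∩ L) := fun j =>
        (le_sup_right.trans_lt (huρ j)).le.trans (Cardinal.mk_le_mk_of_subset (hsub j))
      have hsup : #↑L ≤ ⨆ j : ℕ, #↑(L ∩ cyl [j]) := by
        have hcov : L ∩ cyl [] = ⋃ m, L ∩ cyl ([] ++ [m]) := cyl_cover L []
        rw [cyl_nil] at hcov
        have h0 := Cardinal.mk_iUnion_le fun m : ℕ => L ∩ cyl ([] ++ [m])
        rw [Cardinal.mk_nat, ← hcov] at h0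
        have h0' : #↑L ≤ ℵ₀ * ⨆ j : ℕ, #↑(L ∩ cyl [j]) := by simpa using h0
        rcases le_or_gt (⨆ j : ℕ, #↑(L ∩ cyl [j])) ℵ₀ with hS | hS
        · exfalso
          have : #↑L ≤ ℵ₀ := by
            calc #↑L ≤ ℵ₀ * ⨆ j : ℕ, #↑(L ∩ cyl [j]) := h0'
              _ ≤ ℵ₀ * ℵ₀ := mul_le_mul_right hS _
              _ = ℵ₀ := Cardinal.aleph0_mul_aleph0
          exact absurd this (not_le.2 hc)
        · rwa [Cardinal.mul_eq_max le_rfl hS.le, max_eq_right hS.le] at h0'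
      exact hsup.trans (ciSup_le' hbig)
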